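/- Let π: X → P¹ be a rational elliptic surface with a non-reduced fiber F, and let D ⊂ X be a genus-0 bisection of π whose degree-2 map φ = π|_D: D → P¹ is ramified at the point under F. Then the normalization X_D of the base change X ×_π D is again a rational elliptic surface, i.e. e(X_D) = 12. -/
import Mathlib

/-- Kodaira types of singular fibers of an elliptic fibration. -/
inductive KodairaType : Type
  | In (n : ℕ)
  | InStar (n : ℕ)
  | II | III | IV | IVStar | IIIStar | IIStar
  deriving DecidableEq

/-- The Euler number of a singular fiber of each Kodaira type. -/
def eulerNumber : KodairaType → ℕ
  | .In n => n
  | .InStar n => n + 6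
  | .II => 2
  | .III => 3
  | .IV => 4
  | .IVStar => 8
  | .IIIStar => 9
  | .IIStar => 10

/-- A Kodaira type is non-reduced iff it is `Iₙ*`, `IV*`, `III*` or `II*`. -/
def NonReduced : KodairaType → Prop
  | .InStar _ => True
  | .IVStar => True
  | .IIIStar => True
  | .IIStar => True
  | _ => False

/-- Transformation of a Kodaira fiber type under a quadratic base change ramified at
that fiber (Miranda VI.4.1): `Iₙ ↦ I₂ₙ`, `Iₙ* ↦ I₂ₙ`, `II ↦ IV`, `II* ↦ IV*`,
`III ↦ I₀*`, `III* ↦ I₀*`, `IV ↦ IV*`, `IV* ↦ IV`. -/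
def quadBC : KodairaType → KodairaType
  | .In n => .In (2 * n)
  | .InStar n => .In (2 * n)
  | .II => .IV
  | .IIStar => .IVStar
  | .III => .InStar 0
  | .IIIStar => .InStar 0
  | .IV => .IVStar
  | .IVStar => .IV

lemma quadBC_euler_nonreduced (t : KodairaType) (h : NonReduced t) :
    (eulerNumber (quadBC t) : ℤ) = 2 * eulerNumber t - 12 := by
  cases t <;> simp_all [NonReduced, quadBC, eulerNumber] <;> push_cast <;> ring

/-- Let `π : X → ℙ¹` be a rational elliptic surface (so the Euler
numbers of its singular fibers, indexed by `ι` with types `T`, sum to `e(X) = 12`),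
`F = T i₀` a non-reduced fiber, and `D` a genus-0 bisection whose degree-2 map to `ℙ¹`
ramifies at the point under `F` (its second branch point lying under a reduced fiber).
Then the normalization `X_D` of `X ×_π D` — whose Euler number is that of the
transformed fiber above `F` plus twice the Euler numbers of the remaining singular
fibers — satisfies `e(X_D) = 12`, i.e. `X_D` is again a rational elliptic surface. -/
theorem base_change_at_nonreduced_fiber_is_rational
    {ι : Type} [Fintype ι] [DecidableEq ι] (T : ι → KodairaType) (i₀ : ι)
    (hnr : NonReduced (T i₀))
    (hsum : ∑ i, (eulerNumber (T i) : ℤ) = 12)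
    (eXD : ℤ)
    (heXD : eXD = (eulerNumber (quadBC (T i₀)) : ℤ)
        + ∑ i ∈ Finset.univ.erase i₀, 2 * (eulerNumber (T i) : ℤ)) :
    eXD = 12 := by
  have herase : ∑ i ∈ Finset.univ.erase i₀, (eulerNumber (T i) : ℤ)
      = 12 - eulerNumber (T i₀) := by
    rw [← hsum, ← Finset.add_sum_erase _ _ (Finset.mem_univ i₀)]
    ring
  rw [heXD, quadBC_euler_nonreduced _ hnr, ← Finset.mul_sum, herase]
  ring
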